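/- The polynomial ring $R[x,y]$ in two commuting variables over any field $R$ is not finitely separable. -/

import Mathlib

/-- A (not necessarily unital) ring `K` is finitely separable if every element `a`
lying outside a subring `A` can be separated from `A` by a homomorphism to a finite ring. -/
def IsFinSep (K : Type) [NonUnitalRing K] : Prop :=
  ∀ (a : K) (A : NonUnitalSubring K), a ∉ A →
    ∃ (F : Type) (_ : NonUnitalRing F) (_ : Finite F),
      ∃ φ : K →ₙ+* F, φ a ∉ ⇑φ '' (A : Set K)

/-- `ppow a n = a ^ (n + 1)`, the positive powers of `a` in a non-unital ring. -/
def ppow {K : Type} [NonUnitalRing K] (a : K) : ℕ → K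
  | 0 => a
  | n + 1 => ppow a n * a

/-- Evaluation of an integer polynomial (whose constant term is ignored, hence
meaningful for polynomials with zero constant term) at an element of a non-unital ring. -/
def evalnc {K : Type} [NonUnitalRing K] (p : Polynomial ℤ) (a : K) : K :=
  ∑ i ∈ Finset.range p.natDegree, p.coeff (i + 1) • ppow a i

namespace Stmt6Aux

open MvPolynomial

variable (R : Type) [Field R]

/-- weight on exponents: `-1` for exponent `0`, otherwise the 2-adic valuation. -/
noncomputable def c : ℕ → R := fun k => if k = 0 then -1 else ((k.factorization 2 : ℕ) : R)

lemma c_zero : c R 0 = -1 := by simp [c]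

lemma c_two_mul {i : ℕ} (hi : i ≠ 0) : c R (2 * i) = c R i + 1 := by
  have h2i : 2 * i ≠ 0 := by omega
  have hfac : (2 * i).factorization 2 = i.factorization 2 + 1 := by
    rw [Nat.factorization_mul two_ne_zero hi]
    simp [Nat.Prime.factorization Nat.prime_two]
    ring
  simp only [c, if_neg h2i, if_neg hi, hfac]
  push_cast
  ring

/-- weight on monomials. -/
noncomputable def w : (Fin 2 →₀ ℕ) → R := fun m => if m 0 = 1 then c R (m 1) else 0

/-- the additive invariant: sum of weights of monomials times coefficients. -/
noncomputable def Xi : MvPolynomial (Fin 2) R →+ R where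
  toFun f := (AddMonoidAlgebra.coeff f).sum fun m r => w R m * r
  map_zero' := Finsupp.sum_zero_index
  map_add' f g := Finsupp.sum_add_index' (fun m => mul_zero _) (fun m r s => mul_add _ _ _)

lemma Xi_monomial (d : Fin 2 →₀ ℕ) (r : R) : Xi R (monomial d r) = w R d * r := by
  show ((AddMonoidAlgebra.coeff (monomial d r : MvPolynomial (Fin 2) R)).sum fun m r => w R m * r) = w R d * r
  rw [← single_eq_monomial]
  exact Finsupp.sum_single_index (mul_zero _)

noncomputable def dd (k : ℕ) : Fin 2 →₀ ℕ := Finsupp.single 0 1 + Finsupp.single 1 k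

lemma xy_eq (k : ℕ) :
    (X 0 : MvPolynomial (Fin 2) R) * X 1 ^ k = monomial (dd k) 1 := by
  rw [X_pow_eq_monomial, X, monomial_mul, one_mul, dd]

lemma d_apply_zero (k : ℕ) : dd k 0 = 1 := by
  simp [dd]

lemma d_apply_one (k : ℕ) : dd k 1 = k := by
  simp [dd]

lemma Xi_xyk (k : ℕ) : Xi R ((X 0 : MvPolynomial (Fin 2) R) * X 1 ^ k) = c R k := by
  rw [xy_eq, Xi_monomial, mul_one]
  unfold w
  rw [d_apply_zero, d_apply_one, if_pos rfl]

lemma Xi_x : Xi R (X 0 : MvPolynomial (Fin 2) R) = -1 := by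
  have h : (X 0 : MvPolynomial (Fin 2) R) = X 0 * X 1 ^ 0 := by ring
  rw [h, Xi_xyk, c_zero]

lemma coeff_xyk (k : ℕ) {m : Fin 2 →₀ ℕ} (hm : m 0 = 0) :
    coeff m ((X 0 : MvPolynomial (Fin 2) R) * X 1 ^ k) = 0 := by
  classical
  rw [xy_eq, coeff_monomial, if_neg]
  intro h
  rw [← h, d_apply_zero] at hm
  omega

/-- products of two "positive x-degree" polynomials have no coefficients in x-degree ≤ 1 -/
lemma coeff_mul_lowdeg {f g : MvPolynomial (Fin 2) R}
    (hf : ∀ m : Fin 2 →₀ ℕ, m 0 = 0 → coeff m f = 0)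
    (hg : ∀ m : Fin 2 →₀ ℕ, m 0 = 0 → coeff m g = 0)
    {m : Fin 2 →₀ ℕ} (hm : m 0 ≤ 1) : coeff m (f * g) = 0 := by
  classical
  rw [coeff_mul]
  apply Finset.sum_eq_zero
  intro p hp
  rw [Finset.HasAntidiagonal.mem_antidiagonal] at hp
  have hsum : p.1 0 + p.2 0 = m 0 := by
    rw [← hp, Finsupp.add_apply]
  have : p.1 0 = 0 ∨ p.2 0 = 0 := by omega
  rcases this with h | h
  · rw [hf _ h, zero_mul]
  · rw [hg _ h, mul_zero]

/-- the invariant subring -/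
noncomputable def N : NonUnitalSubring (MvPolynomial (Fin 2) R) where
  carrier := {f | (∀ m : Fin 2 →₀ ℕ, m 0 = 0 → coeff m f = 0) ∧ Xi R f = 0}
  zero_mem' := ⟨fun m _ => coeff_zero m, map_zero _⟩
  add_mem' := fun {a b} ha hb =>
    ⟨fun m hm => by rw [coeff_add, ha.1 m hm, hb.1 m hm, add_zero],
     by rw [map_add, ha.2, hb.2, add_zero]⟩
  neg_mem' := fun {a} ha =>
    ⟨fun m hm => by rw [coeff_neg, ha.1 m hm, neg_zero],
     by rw [map_neg, ha.2, neg_zero]⟩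
  mul_mem' := fun {a b} ha hb => by
    refine ⟨fun m hm => coeff_mul_lowdeg R ha.1 hb.1 (by omega), ?_⟩
    show ((AddMonoidAlgebra.coeff (a * b)).sum fun m r => w R m * r) = 0
    rw [MvPolynomial.sum_def]
    apply Finset.sum_eq_zero
    intro m _
    by_cases h1 : m 0 = 1
    · rw [coeff_mul_lowdeg R ha.1 hb.1 (le_of_eq h1), mul_zero]
    · unfold w
      rw [if_neg h1, zero_mul]

lemma gen_mem_N {i : ℕ} (hi : 1 ≤ i) :
    (X 0 + X 0 * X 1 ^ (2 * i) - X 0 * X 1 ^ i : MvPolynomial (Fin 2) R) ∈ N R := by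
  constructor
  · intro m hm
    have h0 : coeff m (X 0 : MvPolynomial (Fin 2) R) = 0 := by
      have := coeff_xyk R 0 hm
      rwa [pow_zero, mul_one] at this
    rw [coeff_sub, coeff_add, h0, coeff_xyk R _ hm, coeff_xyk R _ hm]
    ring
  · rw [map_sub, map_add, Xi_x, Xi_xyk, Xi_xyk, c_two_mul R (by omega)]
    ring

lemma x_not_mem_N : (X 0 : MvPolynomial (Fin 2) R) ∉ N R := by
  intro h
  have h2 := h.2
  rw [Xi_x] at h2
  exact one_ne_zero (neg_eq_zero.mp h2)

end Stmt6Aux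

/-- The polynomial ring in two commuting variables over a field is not finitely separable. -/
theorem stmt6 (R : Type) [Field R] : ¬ IsFinSep (MvPolynomial (Fin 2) R) := by
  classical
  intro h
  open MvPolynomial Stmt6Aux in
  set x : MvPolynomial (Fin 2) R := X 0 with hx
  set y : MvPolynomial (Fin 2) R := X 1 with hy
  set S : Set (MvPolynomial (Fin 2) R) :=
    {f | ∃ i : ℕ, 1 ≤ i ∧ f = x + x * y ^ (2 * i) - x * y ^ i} with hS
  set A := NonUnitalSubring.closure S with hA
  have hAN : A ≤ Stmt6Aux.N R := by
    rw [hA, NonUnitalSubring.closure_le]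
    rintro f ⟨i, hi, rfl⟩
    exact Stmt6Aux.gen_mem_N R hi
  have hxA : x ∉ A := fun hmem => Stmt6Aux.x_not_mem_N R (hAN hmem)
  obtain ⟨F, instF, finF, φ, hφ⟩ := h x A hxA
  -- find i ≥ 1 with φ (y ^ (2 i)) = φ (y ^ i)
  obtain ⟨a, b, hab, hgab⟩ :=
    Finite.exists_ne_map_eq_of_infinite (fun n : ℕ => φ (y ^ (n + 1)))
  obtain ⟨M, k, hM, hk, hMk⟩ :
      ∃ M k : ℕ, 1 ≤ M ∧ 1 ≤ k ∧ φ (y ^ M) = φ (y ^ (M + k)) := by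
    rcases Nat.lt_or_ge a b with hlt | hge
    · refine ⟨a + 1, b - a, by omega, by omega, ?_⟩
      have e : a + 1 + (b - a) = b + 1 := by omega
      rw [e]; exact hgab
    · have hlt : b < a := by omega
      refine ⟨b + 1, a - b, by omega, by omega, ?_⟩
      have e : b + 1 + (a - b) = a + 1 := by omega
      rw [e]; exact hgab.symm
  have step : ∀ d : ℕ, φ (y ^ (M + d)) = φ (y ^ (M + k + d)) := by
    intro d
    have e1 : y ^ (M + d) = y ^ M * y ^ d := pow_add y M d
    have e2 : y ^ (M + k + d) = y ^ (M + k) * y ^ d := pow_add y (M + k) d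
    rw [e1, e2, map_mul, map_mul, hMk]
  have iter : ∀ (cc : ℕ), ∀ d : ℕ, φ (y ^ (M + d + cc * k)) = φ (y ^ (M + d)) := by
    intro cc
    induction cc with
    | zero => intro d; norm_num
    | succ n ih =>
      intro d
      have e : M + d + (n + 1) * k = M + k + (d + n * k) := by ring
      have e2 : M + (d + n * k) = M + d + n * k := by ring
      rw [e, ← step (d + n * k), e2, ih d]
  have hMle : M ≤ M * k := Nat.le_mul_of_pos_right M (by omega)
  set i := M * k with hi
  have hi1 : 1 ≤ i := by
    have : 1 ≤ M * k := Nat.one_le_iff_ne_zero.mpr (by positivity)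
    omega
  have h2i : φ (y ^ (2 * i)) = φ (y ^ i) := by
    have e1 : M + (M * k - M) = i := by omega
    have e2 : 2 * i = M + (M * k - M) + M * k := by omega
    rw [e2, iter M (M * k - M), e1]
  have hgS : x + x * y ^ (2 * i) - x * y ^ i ∈ S := ⟨i, hi1, rfl⟩
  have hgA : x + x * y ^ (2 * i) - x * y ^ i ∈ A := NonUnitalSubring.subset_closure hgS
  have hval : φ (x + x * y ^ (2 * i) - x * y ^ i) = φ x := by
    rw [map_sub, map_add, map_mul, map_mul, h2i]
    exact add_sub_cancel_right _ _
  exact hφ ⟨_, hgA, hval⟩
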